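/- Soundness of axiom BP: if every transition of nondeterministic process E can be matched by an (optional) transition of probabilistic process P with branching probabilistically bisimilar target (E ⊑ P), then ∂(E + τ.P) ≈_b P, and consequently α.(∂(E + τ.P) ⊕_r Q) ≈_rb α.(P ⊕_r Q). -/

import Mathlib

open scoped BigOperators
open Classical

namespace PBB

structure Distr (X : Type) where
  f : X → ℝ
  nonneg : ∀ x, 0 ≤ f x
  fin : (Function.support f).Finite
  sum_one : ∑ᶠ x, f x = 1

namespace Distr

variable {X : Type}

noncomputable def dirac (E : X) : Distr X where
  f := fun x => if x = E then 1 else 0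
  nonneg := fun x => by by_cases h : x = E <;> simp [h]
  fin := Set.Finite.subset (Set.finite_singleton E) (by
    intro x hx
    simp only [Function.mem_support] at hx
    by_contra h
    simp only [Set.mem_singleton_iff] at h
    simp [h] at hx)
  sum_one := by
    rw [finsum_eq_single _ E (by intro x hx; simp [hx])]
    simp

noncomputable def mix (r : ℝ) (h0 : 0 ≤ r) (h1 : r ≤ 1) (μ ν : Distr X) : Distr X where
  f := fun x => r * μ.f x + (1 - r) * ν.f x
  nonneg := fun x =>
    add_nonneg (mul_nonneg h0 (μ.nonneg x)) (mul_nonneg (by linarith) (ν.nonneg x))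
  fin := Set.Finite.subset (μ.fin.union ν.fin) (by
    intro x hx
    simp only [Function.mem_support] at hx
    by_contra h
    simp only [Set.mem_union, Function.mem_support, not_or, not_not] at h
    simp [h.1, h.2] at hx)
  sum_one := by
    have hf : (Function.support fun x => r * μ.f x).Finite :=
      Set.Finite.subset μ.fin (by
        intro x hx
        simp only [Function.mem_support] at hx ⊢
        intro h; simp [h] at hx)
    have hg : (Function.support fun x => (1 - r) * ν.f x).Finite :=
      Set.Finite.subset ν.fin (by
        intro x hx
        simp only [Function.mem_support] at hx ⊢
        intro h; simp [h] at hx)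
    rw [finsum_add_distrib hf hg, ← mul_finsum _ _, ← mul_finsum _ _,
      μ.sum_one, ν.sum_one]
    ring

end Distr

def IsMix {X : Type} (r : ℝ) (μ ν ξ : Distr X) : Prop :=
  ∀ x, ξ.f x = r * μ.f x + (1 - r) * ν.f x

def IsCombo {X I : Type} [Fintype I] (p : I → ℝ) (μs : I → Distr X) (ξ : Distr X) : Prop :=
  (∀ i, 0 ≤ p i) ∧ (∑ i, p i = 1) ∧ ∀ x, ξ.f x = ∑ i, p i * (μs i).f x

/-! ### The probabilistic process calculus -/

mutual
/-- Non-deterministic processes: `E ::= 0 | α.P | E + E`. -/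
inductive PE (Act : Type) : Type where
  | zero : PE Act
  | pre : Act → PP Act → PE Act
  | plus : PE Act → PE Act → PE Act

/-- Probabilistic processes: `P ::= ∂(E) | P ⊕_r P` with `r ∈ (0,1)`. -/
inductive PP (Act : Type) : Type where
  | dirac : PE Act → PP Act
  | pchoice : PP Act → (r : ℝ) → 0 < r → r < 1 → PP Act → PP Act
end

variable {Act : Type}

/-- The distribution `⟦P⟧` denoted by a probabilistic process. -/
noncomputable def den : PP Act → Distr (PE Act)
  | .dirac E => Distr.dirac E
  | .pchoice P r h0 h1 Q => Distr.mix r h0.le h1.le (den P) (den Q)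

/-- The transition relation `E →α μ` on non-deterministic processes. -/
inductive pstep : PE Act → Act → Distr (PE Act) → Prop where
  | pre (α : Act) (P : PP Act) : pstep (.pre α P) α (den P)
  | left {E₁ E₂ : PE Act} {α : Act} {μ : Distr (PE Act)} :
      pstep E₁ α μ → pstep (.plus E₁ E₂) α μ
  | right {E₁ E₂ : PE Act} {α : Act} {μ : Distr (PE Act)} :
      pstep E₂ α μ → pstep (.plus E₁ E₂) α μ

/-- The (combined) transition relation `μ →α μ'` on distributions. -/
def dstep (μ : Distr (PE Act)) (α : Act) (μ' : Distr (PE Act)) : Prop :=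
  ∃ (I : Type) (_ : Fintype I) (p : I → ℝ) (Es : I → PE Act) (μs : I → Distr (PE Act)),
    IsCombo p (fun i => Distr.dirac (Es i)) μ ∧ IsCombo p μs μ' ∧
    ∀ i, pstep (Es i) α (μs i)

variable (τ : Act)

/-- The partial silent step `μ →(τ) μ'`. -/
def ptau (μ μ' : Distr (PE Act)) : Prop :=
  dstep μ τ μ' ∨
  ∃ (s : ℝ) (μ₁ μ₂ μ₁' : Distr (PE Act)), 0 ≤ s ∧ s ≤ 1 ∧
    IsMix s μ₁ μ₂ μ ∧ IsMix s μ₁' μ₂ μ' ∧ dstep μ₁ τ μ₁'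

/-- `μ ⟹ μ'`: the reflexive-transitive closure of `→(τ)`. -/
def wtau : Distr (PE Act) → Distr (PE Act) → Prop :=
  Relation.ReflTransGen (ptau τ)

/-- The optional step `μ →(α) μ'`. -/
def optStep (μ : Distr (PE Act)) (α : Act) (μ' : Distr (PE Act)) : Prop :=
  dstep μ α μ' ∨ (α = τ ∧ ptau τ μ μ')

/-- Weak decomposability of a relation on distributions. -/
def WeaklyDecomposable (R : Distr (PE Act) → Distr (PE Act) → Prop) : Prop :=
  ∀ (I : Type) (_ : Fintype I) (p : I → ℝ) (μs : I → Distr (PE Act))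
    (μ ν : Distr (PE Act)),
    R μ ν → IsCombo p μs μ →
    ∃ (ν' : Distr (PE Act)) (νs : I → Distr (PE Act)),
      wtau τ ν ν' ∧ R μ ν' ∧ IsCombo p νs ν' ∧ ∀ i, R (μs i) (νs i)

/-- Decomposability of a relation on distributions. -/
def Decomposable (R : Distr (PE Act) → Distr (PE Act) → Prop) : Prop :=
  ∀ (I : Type) (_ : Fintype I) (p : I → ℝ) (μs : I → Distr (PE Act))
    (μ ν : Distr (PE Act)),
    R μ ν → IsCombo p μs μ →
    ∃ νs : I → Distr (PE Act), IsCombo p νs ν ∧ ∀ i, R (μs i) (νs i)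

/-- Branching probabilistic bisimulation relations. -/
def IsBranchingBisim (R : Distr (PE Act) → Distr (PE Act) → Prop) : Prop :=
  Symmetric R ∧ WeaklyDecomposable τ R ∧
  ∀ μ ν α μ', R μ ν → dstep μ α μ' →
    ∃ ν' ν'', wtau τ ν ν' ∧ optStep τ ν' α ν'' ∧ R μ ν' ∧ R μ' ν''

/-- Branching probabilistic bisimilarity `≈_b`. -/
def bb (μ ν : Distr (PE Act)) : Prop :=
  ∃ R, IsBranchingBisim τ R ∧ R μ ν

/-- Strong probabilistic bisimulation relations. -/
def IsStrongBisim (R : Distr (PE Act) → Distr (PE Act) → Prop) : Prop :=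
  Symmetric R ∧ Decomposable R ∧
  ∀ μ ν α μ', R μ ν → dstep μ α μ' →
    ∃ ν', dstep ν α ν' ∧ R μ' ν'

/-- Strong probabilistic bisimilarity `∼`. -/
def sb (μ ν : Distr (PE Act)) : Prop :=
  ∃ R, IsStrongBisim R ∧ R μ ν

/-- Rooted branching probabilistic bisimulation relations. -/
def IsRootedBranchingBisim (R : Distr (PE Act) → Distr (PE Act) → Prop) : Prop :=
  Symmetric R ∧ Decomposable R ∧
  ∀ μ ν α μ', R μ ν → dstep μ α μ' →
    ∃ ν', dstep ν α ν' ∧ bb τ μ' ν'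

/-- Rooted branching probabilistic bisimilarity `≈_rb`. -/
def rbb (μ ν : Distr (PE Act)) : Prop :=
  ∃ R, IsRootedBranchingBisim τ R ∧ R μ ν

/-- `≈_b`-stability of a distribution. -/
def Stable (μ : Distr (PE Act)) : Prop :=
  ∀ μ', wtau τ μ μ' → bb τ μ μ' → μ' = μ

/-- A state is rigid iff it admits no inert `τ`-transition. -/
def Rigid (E : PE Act) : Prop :=
  ¬ ∃ μ, pstep E τ μ ∧ bb τ (Distr.dirac E) μ

/-- `E ⊑ P`: every transition of `E` is matched by an optional transition of `⟦P⟧`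
with branching probabilistically bisimilar target. -/
def sq (E : PE Act) (P : PP Act) : Prop :=
  ∀ α μ, pstep E α μ → ∃ ν, optStep τ (den P) α ν ∧ bb τ μ ν


/-! ### Auxiliary lemmas -/

namespace Distr

@[ext] theorem ext' {X : Type} {μ ν : Distr X} (h : ∀ x, μ.f x = ν.f x) : μ = ν := by
  cases μ; cases ν; simp only [mk.injEq]; funext x; exact h x

theorem sum_finset {X : Type} (μ : Distr X) (s : Finset X)
    (h : Function.support μ.f ⊆ s) : ∑ x ∈ s, μ.f x = 1 := by
  rw [← finsum_eq_sum_of_support_subset μ.f (by exact_mod_cast h)]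
  exact μ.sum_one

noncomputable def suppF {X : Type} (μ : Distr X) : Finset X := μ.fin.toFinset

theorem supp_subset {X : Type} (μ : Distr X) : Function.support μ.f ⊆ μ.suppF := by
  intro x hx; simpa [suppF] using hx

theorem sum_suppF {X : Type} (μ : Distr X) : ∑ x ∈ μ.suppF, μ.f x = 1 :=
  μ.sum_finset _ μ.supp_subset

theorem sum_finset' {X : Type} (μ : Distr X) (s : Finset X) (h : μ.suppF ⊆ s) :
    ∑ x ∈ s, μ.f x = 1 :=
  μ.sum_finset s (fun x hx => h (μ.supp_subset hx))

theorem le_one {X : Type} (μ : Distr X) (x : X) : μ.f x ≤ 1 := by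
  have h1 : ∑ y ∈ insert x μ.suppF, μ.f y = 1 :=
    μ.sum_finset' _ (Finset.subset_insert _ _)
  have := Finset.single_le_sum (f := μ.f) (fun y _ => μ.nonneg y)
    (Finset.mem_insert_self x μ.suppF)
  linarith

theorem dirac_f {X : Type} (E x : X) : (dirac E).f x = if x = E then 1 else 0 := rfl

theorem dirac_self {X : Type} (E : X) : (dirac E).f E = 1 := by simp [dirac_f]

end Distr

section Combo

variable {X : Type} {I : Type} [Fintype I]

/-- Construct the convex combination distribution. -/
noncomputable def comboD (p : I → ℝ) (hp : ∀ i, 0 ≤ p i) (h1 : ∑ i, p i = 1)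
    (ds : I → Distr X) : Distr X where
  f := fun x => ∑ i, p i * (ds i).f x
  nonneg := fun x => Finset.sum_nonneg fun i _ => mul_nonneg (hp i) ((ds i).nonneg x)
  fin := by
    apply Set.Finite.subset (Set.finite_iUnion (fun i : I => (ds i).fin))
    intro x hx
    simp only [Function.mem_support] at hx
    by_contra hc
    simp only [Set.mem_iUnion, Function.mem_support, not_exists, not_not] at hc
    apply hx
    exact Finset.sum_eq_zero fun i _ => by rw [hc i, mul_zero]
  sum_one := by
    classical
    set s : Finset X := Finset.univ.sup (fun i : I => (ds i).suppF) with hs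
    have hsub : ∀ i : I, Function.support (ds i).f ⊆ s := by
      intro i x hx
      exact Finset.mem_coe.mpr (Finset.mem_sup.mpr ⟨i, Finset.mem_univ i, (ds i).supp_subset hx⟩)
    have hsupp : Function.support (fun x => ∑ i, p i * (ds i).f x) ⊆ s := by
      intro x hx
      simp only [Function.mem_support] at hx
      by_contra hc
      apply hx
      refine Finset.sum_eq_zero fun i _ => ?_
      have : (ds i).f x = 0 := by
        by_contra h0
        exact hc (hsub i h0)
      rw [this, mul_zero]
    rw [finsum_eq_sum_of_support_subset _ (by exact_mod_cast hsupp)]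
    rw [Finset.sum_comm]
    have : ∀ i : I, ∑ x ∈ s, p i * (ds i).f x = p i := by
      intro i
      rw [← Finset.mul_sum, (ds i).sum_finset s (hsub i), mul_one]
    simp only [this]
    exact h1

theorem comboD_f (p : I → ℝ) (hp : ∀ i, 0 ≤ p i) (h1 : ∑ i, p i = 1)
    (ds : I → Distr X) (x : X) : (comboD p hp h1 ds).f x = ∑ i, p i * (ds i).f x := rfl

theorem isCombo_comboD (p : I → ℝ) (hp : ∀ i, 0 ≤ p i) (h1 : ∑ i, p i = 1)
    (ds : I → Distr X) : IsCombo p ds (comboD p hp h1 ds) :=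
  ⟨hp, h1, fun _ => rfl⟩

theorem IsCombo.eq_comboD {p : I → ℝ} {ds : I → Distr X} {ξ : Distr X}
    (h : IsCombo p ds ξ) : ξ = comboD p h.1 h.2.1 ds :=
  Distr.ext' fun x => h.2.2 x

/-- each weighted component is bounded by the total -/
theorem IsCombo.le {p : I → ℝ} {ds : I → Distr X} {ξ : Distr X}
    (h : IsCombo p ds ξ) (i : I) (x : X) : p i * (ds i).f x ≤ ξ.f x := by
  rw [h.2.2 x]
  exact Finset.single_le_sum (f := fun j => p j * (ds j).f x)
    (fun j _ => mul_nonneg (h.1 j) ((ds j).nonneg x)) (Finset.mem_univ i)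

theorem IsCombo.const {p : I → ℝ} (hp : ∀ i, 0 ≤ p i) (h1 : ∑ i, p i = 1) (ξ : Distr X) :
    IsCombo p (fun _ => ξ) ξ :=
  ⟨hp, h1, fun x => by rw [← Finset.sum_mul, h1, one_mul]⟩

end Combo

/-- a distribution vanishing outside a point is Dirac -/
theorem eq_dirac_of_support {X : Type} {μ : Distr X} {F : X}
    (h : ∀ y, y ≠ F → μ.f y = 0) : μ = Distr.dirac F := by
  have hF : μ.f F = 1 := by
    have := μ.sum_finset {F} (by
      intro y hy
      simp only [Function.mem_support] at hy
      simp only [Finset.coe_singleton, Set.mem_singleton_iff]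
      by_contra hc
      exact hy (h y hc))
    simpa using this
  apply Distr.ext'
  intro y
  rcases eq_or_ne y F with rfl | hy
  · simp [Distr.dirac_f, hF]
  · simp [Distr.dirac_f, hy, h y hy]

/-- components of a decomposition of a Dirac distribution with positive weight
are equal to the Dirac distribution. -/
theorem IsCombo.dirac_comp {X I : Type} [Fintype I] {p : I → ℝ} {ds : I → Distr X} {F : X}
    (h : IsCombo p ds (Distr.dirac F)) {i : I} (hi : 0 < p i) : ds i = Distr.dirac F := by
  apply eq_dirac_of_support
  intro y hy
  have hle := h.le i y
  have hz : (Distr.dirac F).f y = 0 := by simp [Distr.dirac_f, hy]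
  nlinarith [(ds i).nonneg y]

section Sums

/-- reindexing a combination along an equivalence -/
theorem IsCombo.reindex {X I J : Type} [Fintype I] [Fintype J] (e : J ≃ I)
    {p : I → ℝ} {ds : I → Distr X} {μ : Distr X} (h : IsCombo p ds μ) :
    IsCombo (p ∘ e) (ds ∘ e) μ := by
  refine ⟨fun j => h.1 (e j), ?_, fun x => ?_⟩
  · rw [← h.2.1]; exact Fintype.sum_equiv e _ _ (fun j => rfl)
  · rw [h.2.2 x]; exact (Fintype.sum_equiv e _ _ (fun j => rfl)).symm

theorem sum_subtype_ne_zero {I : Type} [Fintype I] (p : I → ℝ) (g : I → ℝ)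
    (hg : ∀ i, p i = 0 → g i = 0) :
    ∑ i : {i : I // p i ≠ 0}, g i.1 = ∑ i, g i := by
  classical
  rw [← Finset.sum_subtype (Finset.univ.filter (fun i => p i ≠ 0))
    (by intro x; simp) g]
  exact Finset.sum_filter_of_ne (by intro x _ hgx; exact fun hp => hgx (hg x hp))

/-- restricting a combination to its nonzero weights -/
theorem IsCombo.restrict {X I : Type} [Fintype I]
    {p : I → ℝ} {ds : I → Distr X} {μ : Distr X} (h : IsCombo p ds μ) :
    IsCombo (fun i : {i : I // p i ≠ 0} => p i.1) (fun i => ds i.1) μ := by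
  refine ⟨fun i => h.1 i.1, ?_, fun x => ?_⟩
  · rw [← h.2.1]; exact sum_subtype_ne_zero p p (fun i hi => hi)
  · rw [h.2.2 x]
    exact (sum_subtype_ne_zero p (fun i => p i * (ds i).f x)
      (fun i hi => by show p i * _ = 0; rw [hi, zero_mul])).symm

/-- grouping a sum over indices by the state they map to -/
theorem sum_group {X J : Type} [Fintype J] {q : J → ℝ} {Es : J → X} {μ : Distr X}
    (hq : ∀ x, μ.f x = ∑ j, q j * (Distr.dirac (Es j)).f x) (g : X → ℝ) :
    ∑ j, q j * g (Es j) = ∑ x ∈ Finset.univ.image Es, μ.f x * g x := by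
  classical
  rw [← Finset.sum_fiberwise_of_maps_to
    (fun j _ => Finset.mem_image_of_mem Es (Finset.mem_univ j))
    (fun j => q j * g (Es j))]
  refine Finset.sum_congr rfl (fun x hx => ?_)
  have h1 : ∑ j ∈ Finset.univ.filter (fun j => Es j = x), q j * g (Es j)
      = (∑ j ∈ Finset.univ.filter (fun j => Es j = x), q j) * g x := by
    rw [Finset.sum_mul]
    refine Finset.sum_congr rfl (fun j hj => ?_)
    rw [(Finset.mem_filter.mp hj).2]
  rw [h1]
  congr 1
  rw [hq x, Finset.sum_filter]
  refine Finset.sum_congr rfl (fun j _ => ?_)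
  by_cases hj : Es j = x
  · simp [hj, Distr.dirac_f]
  · simp [hj, Distr.dirac_f, Ne.symm hj]

theorem support_subset_image {X J : Type} [Fintype J] {q : J → ℝ} {Es : J → X} {μ : Distr X}
    (hq : ∀ x, μ.f x = ∑ j, q j * (Distr.dirac (Es j)).f x) :
    Function.support μ.f ⊆ Finset.univ.image Es := by
  classical
  intro x hx
  simp only [Function.mem_support] at hx
  by_contra hc
  apply hx
  rw [hq x]
  refine Finset.sum_eq_zero (fun j _ => ?_)
  have : x ≠ Es j := by
    intro he
    exact hc (by rw [he]; exact Finset.mem_coe.mpr (Finset.mem_image_of_mem Es (Finset.mem_univ j)))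
  simp [Distr.dirac_f, this]

end Sums

section DstepLemmas

variable {Act : Type}

theorem dstep_of_pstep {F : PE Act} {α : Act} {μ : Distr (PE Act)}
    (h : pstep F α μ) : dstep (Distr.dirac F) α μ := by
  refine ⟨PUnit, inferInstance, fun _ => 1, fun _ => F, fun _ => μ, ?_, ?_, fun _ => h⟩
  · exact ⟨fun _ => zero_le_one, by simp, fun x => by simp⟩
  · exact ⟨fun _ => zero_le_one, by simp, fun x => by simp⟩

/-- normal form of a transition with `Fin n` index type -/
theorem dstep_fin {μ μ' : Distr (PE Act)} {α : Act} (h : dstep μ α μ') :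
    ∃ (n : ℕ) (p : Fin n → ℝ) (Es : Fin n → PE Act) (ms : Fin n → Distr (PE Act)),
      IsCombo p (fun j => Distr.dirac (Es j)) μ ∧ IsCombo p ms μ' ∧
      ∀ j, pstep (Es j) α (ms j) := by
  obtain ⟨I, hI, p, Es, ms, hA, hB, hC⟩ := h
  letI := hI
  refine ⟨Fintype.card I, p ∘ (Fintype.equivFin I).symm, Es ∘ (Fintype.equivFin I).symm,
    ms ∘ (Fintype.equivFin I).symm, ?_, hB.reindex _, fun j => hC _⟩
  have := hA.reindex (Fintype.equivFin I).symm
  exact this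

/-- combining transitions from the components of a combination -/
theorem dstep_combo {I : Type} [Fintype I] {p : I → ℝ}
    {σ σ' : I → Distr (PE Act)} {μ μ' : Distr (PE Act)} {α : Act}
    (hc : IsCombo p σ μ) (hc' : IsCombo p σ' μ')
    (hd : ∀ i, p i ≠ 0 → dstep (σ i) α (σ' i)) : dstep μ α μ' := by
  classical
  have hcS := hc.restrict
  have hc'S := hc'.restrict
  have hdS : ∀ i : {i : I // p i ≠ 0}, dstep (σ i.1) α (σ' i.1) := fun i => hd i.1 i.2
  have hdS' := fun i => dstep_fin (hdS i)
  choose n q Es ms hA hB hC using hdS'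
  refine ⟨(Σ i : {i : I // p i ≠ 0}, Fin (n i)), inferInstance,
    fun x => p x.1.1 * q x.1 x.2, fun x => Es x.1 x.2, fun x => ms x.1 x.2, ?_, ?_,
    fun x => hC x.1 x.2⟩
  · refine ⟨fun x => mul_nonneg (hc.1 x.1.1) ((hA x.1).1 x.2), ?_, fun y => ?_⟩
    · rw [← Finset.univ_sigma_univ, Finset.sum_sigma]
      have : ∀ i : {i : I // p i ≠ 0}, ∑ j : Fin (n i), p i.1 * q i j = p i.1 := by
        intro i
        rw [← Finset.mul_sum, (hA i).2.1, mul_one]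
      simp only [this]
      exact hcS.2.1
    · rw [hcS.2.2 y, ← Finset.univ_sigma_univ, Finset.sum_sigma]
      refine Finset.sum_congr rfl (fun i _ => ?_)
      rw [(hA i).2.2 y, Finset.mul_sum]
      exact Finset.sum_congr rfl (fun j _ => by ring)
  · refine ⟨fun x => mul_nonneg (hc.1 x.1.1) ((hA x.1).1 x.2), ?_, fun y => ?_⟩
    · rw [← Finset.univ_sigma_univ, Finset.sum_sigma]
      have : ∀ i : {i : I // p i ≠ 0}, ∑ j : Fin (n i), p i.1 * q i j = p i.1 := by
        intro i
        rw [← Finset.mul_sum, (hA i).2.1, mul_one]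
      simp only [this]
      exact hcS.2.1
    · rw [hc'S.2.2 y, ← Finset.univ_sigma_univ, Finset.sum_sigma]
      refine Finset.sum_congr rfl (fun i _ => ?_)
      rw [(hB i).2.2 y, Finset.mul_sum]
      exact Finset.sum_congr rfl (fun j _ => by ring)

theorem isCombo_of_isMix {X : Type} {s : ℝ} {a b c : Distr X}
    (h0 : 0 ≤ s) (h1 : s ≤ 1) (h : IsMix s a b c) :
    IsCombo (fun i : Bool => if i then s else 1 - s) (fun i : Bool => if i then a else b) c := by
  refine ⟨fun i => by cases i <;> simp <;> linarith, by simp, fun x => by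
    rw [h x, Fintype.sum_bool]; simp⟩

/-- a mix of two transitions is a transition -/
theorem dstep_mix {s : ℝ} (h0 : 0 ≤ s) (h1 : s ≤ 1) {a b a' b' μ μ' : Distr (PE Act)} {α : Act}
    (hm : IsMix s a b μ) (hm' : IsMix s a' b' μ')
    (hda : s ≠ 0 → dstep a α a') (hdb : s ≠ 1 → dstep b α b') : dstep μ α μ' := by
  refine dstep_combo (isCombo_of_isMix h0 h1 hm) (isCombo_of_isMix h0 h1 hm') ?_
  intro i hi
  cases i
  · simp only [Bool.false_eq_true, if_false] at hi ⊢
    exact hdb (fun he => hi (by rw [he]; ring))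
  · simp only [if_true] at hi ⊢
    exact hda hi

end DstepLemmas

section Decompose

variable {Act : Type}

/-- decomposing a transition of a combination into transitions of the components -/
theorem dstep_decompose {K : Type} [Fintype K] {w : K → ℝ} {σs : K → Distr (PE Act)}
    {μ μ' : Distr (PE Act)} {α : Act}
    (hc : IsCombo w σs μ) (hd : dstep μ α μ') :
    ∃ σs' : K → Distr (PE Act), IsCombo w σs' μ' ∧
      ∀ k, w k ≠ 0 → dstep (σs k) α (σs' k) := by
  classical
  obtain ⟨n, q, Es, ms, hA, hB, hC⟩ := dstep_fin hd
  have hA2 : ∀ x, μ.f x = ∑ j, q j * (Distr.dirac (Es j)).f x := hA.2.2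
  have hq0 : ∀ j, 0 ≤ q j := hA.1
  have hqle : ∀ j, q j ≤ μ.f (Es j) := by
    intro j; have := hA.le j (Es j); simpa [Distr.dirac_f] using this
  have himg := support_subset_image hA2
  have hσsupp : ∀ k, w k ≠ 0 → ∀ x, μ.f x = 0 → (σs k).f x = 0 := by
    intro k hk x hx
    have h1 := hc.le k x
    have hw : 0 < w k := lt_of_le_of_ne (hc.1 k) (Ne.symm hk)
    nlinarith [(σs k).nonneg x]
  have hex : ∀ k, ∃ T : Distr (PE Act),
      (w k ≠ 0 → dstep (σs k) α T) ∧
      ∀ y, w k * T.f y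
        = ∑ j, (q j * (w k * (σs k).f (Es j) / μ.f (Es j))) * (ms j).f y := by
    intro k
    by_cases hk : w k = 0
    · refine ⟨μ', fun h => absurd hk h, fun y => ?_⟩
      rw [hk]
      simp
    · set q' : Fin n → ℝ := fun j => q j * ((σs k).f (Es j) / μ.f (Es j)) with hq'def
      have hq'0 : ∀ j, 0 ≤ q' j := fun j =>
        mul_nonneg (hq0 j) (div_nonneg ((σs k).nonneg _) (μ.nonneg _))
      have hsuppk : Function.support (σs k).f ⊆ Finset.univ.image Es := by
        intro x hx
        apply himg
        simp only [Function.mem_support] at hx ⊢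
        exact fun h0 => hx (hσsupp k hk x h0)
      have hsum1 : ∑ j, q' j = 1 := by
        rw [hq'def]
        rw [sum_group hA2 (fun x => (σs k).f x / μ.f x)]
        rw [← (σs k).sum_finset _ hsuppk]
        refine Finset.sum_congr rfl (fun x _ => ?_)
        by_cases h0 : μ.f x = 0
        · rw [h0, hσsupp k hk x h0]
          simp
        · rw [mul_comm, div_mul_cancel₀ _ h0]
      have hdirac : ∀ y, (σs k).f y = ∑ j, q' j * (Distr.dirac (Es j)).f y := by
        intro y
        have : ∀ j, q' j * (Distr.dirac (Es j)).f y
            = q j * ((σs k).f (Es j) / μ.f (Es j) * (if y = Es j then 1 else 0)) := by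
          intro j
          rw [hq'def]
          simp only [Distr.dirac_f]
          ring
        rw [Finset.sum_congr rfl (fun j _ => this j)]
        rw [sum_group hA2 (fun x => (σs k).f x / μ.f x * (if y = x then 1 else 0))]
        have : ∀ x, μ.f x * ((σs k).f x / μ.f x * (if y = x then 1 else 0))
            = if y = x then μ.f x * ((σs k).f x / μ.f x) else 0 := by
          intro x
          by_cases hxy : y = x <;> simp [hxy]
        rw [Finset.sum_congr rfl (fun x _ => this x)]
        rw [Finset.sum_ite_eq]
        by_cases hy : y ∈ Finset.univ.image Es
        · rw [if_pos hy]
          by_cases h0 : μ.f y = 0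
          · rw [h0, hσsupp k hk y h0]
            simp
          · rw [mul_comm, div_mul_cancel₀ _ h0]
        · rw [if_neg hy]
          by_contra hne
          exact hy (hsuppk (fun h => hne (by rw [h])))
      refine ⟨comboD q' hq'0 hsum1 ms, fun _ => ?_, fun y => ?_⟩
      · exact ⟨Fin n, inferInstance, q', Es, ms, ⟨hq'0, hsum1, hdirac⟩,
          isCombo_comboD q' hq'0 hsum1 ms, hC⟩
      · rw [comboD_f, Finset.mul_sum]
        refine Finset.sum_congr rfl (fun j _ => ?_)
        rw [hq'def]
        ring
  choose σs' hstep hpt using hex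
  refine ⟨σs', ⟨hc.1, hc.2.1, fun y => ?_⟩, hstep⟩
  rw [hB.2.2 y]
  rw [Finset.sum_congr rfl (fun k _ => hpt k y), Finset.sum_comm]
  refine Finset.sum_congr rfl (fun j _ => ?_)
  have : ∀ k, (q j * (w k * (σs k).f (Es j) / μ.f (Es j))) * (ms j).f y
      = (q j * (ms j).f y / μ.f (Es j)) * (w k * (σs k).f (Es j)) := by
    intro k; ring
  rw [Finset.sum_congr rfl (fun k _ => this k), ← Finset.mul_sum, ← hc.2.2 (Es j)]
  by_cases h0 : μ.f (Es j) = 0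
  · have hj0 : q j = 0 := le_antisymm (h0 ▸ hqle j) (hq0 j)
    rw [hj0, h0]
    simp
  · field_simp

end Decompose

section TauLemmas

variable {Act : Type} {τ : Act}

theorem ptau_refl (τ : Act) (μ : Distr (PE Act)) : ptau τ μ μ := by
  refine Or.inr ⟨0, Distr.dirac (.pre τ (.dirac .zero)), μ, den (.dirac .zero),
    le_refl 0, zero_le_one, fun x => by ring, fun x => by ring,
    dstep_of_pstep (pstep.pre τ _)⟩

theorem cancel_helper {u c d : ℝ} (h : u ≠ 0) : u * (c / u * d) = c * d := by
  field_simp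

theorem dstep_ptau {μ μ' : Distr (PE Act)} (h : dstep μ τ μ') : ptau τ μ μ' := Or.inl h

/-- combining partial silent steps of components of a combination -/
theorem ptau_combo {I : Type} [Fintype I] {p : I → ℝ}
    {σ σ' : I → Distr (PE Act)} {μ μ' : Distr (PE Act)}
    (hc : IsCombo p σ μ) (hc' : IsCombo p σ' μ')
    (h : ∀ i, p i ≠ 0 → ptau τ (σ i) (σ' i)) : ptau τ μ μ' := by
  classical
  have h' : ∀ i, ∃ (s : ℝ) (a b a' : Distr (PE Act)), 0 ≤ s ∧ s ≤ 1 ∧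
      (s ≠ 0 → dstep a τ a') ∧
      (∀ x, p i * (σ i).f x = p i * (s * a.f x + (1 - s) * b.f x)) ∧
      (∀ x, p i * (σ' i).f x = p i * (s * a'.f x + (1 - s) * b.f x)) := by
    intro i
    by_cases hp : p i = 0
    · exact ⟨0, σ i, σ i, σ i, le_refl 0, zero_le_one, fun hs => absurd rfl hs,
        fun x => by rw [hp]; ring, fun x => by rw [hp]; ring⟩
    · rcases h i hp with hd | ⟨s, a, b, a', h0, h1, hm, hm', hd⟩
      · exact ⟨1, σ i, σ i, σ' i, zero_le_one, le_refl 1, fun _ => hd,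
          fun x => by ring, fun x => by ring⟩
      · exact ⟨s, a, b, a', h0, h1, fun _ => hd,
          fun x => by rw [hm x], fun x => by rw [hm' x]⟩
  choose s a b a' hs0 hs1 hd hmx hmx' using h'
  set u : ℝ := ∑ i, p i * s i with hudef
  have hui : ∀ i, 0 ≤ p i * s i := fun i => mul_nonneg (hc.1 i) (hs0 i)
  have hu0 : 0 ≤ u := Finset.sum_nonneg fun i _ => hui i
  have hu1 : u ≤ 1 := by
    rw [hudef, ← hc.2.1]
    exact Finset.sum_le_sum fun i _ => by nlinarith [hc.1 i, hs1 i, hs0 i]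
  have hμ : ∀ x, μ.f x = ∑ i, (p i * s i * (a i).f x + p i * (1 - s i) * (b i).f x) := by
    intro x
    rw [hc.2.2 x]
    refine Finset.sum_congr rfl (fun i _ => ?_)
    rw [show p i * (σ i).f x = p i * (σ i).f x from rfl] at *
    have := hmx i x
    linarith [this]
  have hμ' : ∀ x, μ'.f x = ∑ i, (p i * s i * (a' i).f x + p i * (1 - s i) * (b i).f x) := by
    intro x
    rw [hc'.2.2 x]
    refine Finset.sum_congr rfl (fun i _ => ?_)
    have := hmx' i x
    linarith [this]
  by_cases huz : u = 0
  · -- all active masses zero, so μ' = μ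
    have hz : ∀ i, p i * s i = 0 := by
      intro i
      have := (Finset.sum_eq_zero_iff_of_nonneg (fun i _ => hui i)).mp huz i (Finset.mem_univ i)
      exact this
    have : μ' = μ := by
      apply Distr.ext'
      intro x
      rw [hμ x, hμ' x]
      refine Finset.sum_congr rfl (fun i _ => ?_)
      rw [hz i]
      ring
    rw [this]
    exact ptau_refl τ μ
  · have hupos : 0 < u := lt_of_le_of_ne hu0 (Ne.symm huz)
    have hw0 : ∀ i, 0 ≤ p i * s i / u := fun i => div_nonneg (hui i) hu0
    have hw1 : ∑ i, p i * s i / u = 1 := by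
      rw [← Finset.sum_div, ← hudef, div_self huz]
    set A := comboD _ hw0 hw1 a with hA
    set A' := comboD _ hw0 hw1 a' with hA'
    have hdA : dstep A τ A' := by
      refine dstep_combo (isCombo_comboD _ hw0 hw1 a) (isCombo_comboD _ hw0 hw1 a') ?_
      intro i hi
      apply hd
      intro hsi
      rw [hsi] at hi
      simp at hi
    have hAf : ∀ x, u * A.f x = ∑ i, p i * s i * (a i).f x := by
      intro x
      rw [hA, comboD_f, Finset.mul_sum]
      exact Finset.sum_congr rfl (fun i _ => cancel_helper huz)
    have hAf' : ∀ x, u * A'.f x = ∑ i, p i * s i * (a' i).f x := by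
      intro x
      rw [hA', comboD_f, Finset.mul_sum]
      exact Finset.sum_congr rfl (fun i _ => cancel_helper huz)
    by_cases hu1' : u = 1
    · -- total mass moves; this is a full dstep
      have hz : ∀ i, p i * (1 - s i) = 0 := by
        have hsum : ∑ i, p i * (1 - s i) = 0 := by
          have : ∑ i, p i * (1 - s i) = (∑ i, p i) - u := by
            rw [hudef, ← Finset.sum_sub_distrib]
            exact Finset.sum_congr rfl (fun i _ => by ring)
          rw [this, hc.2.1, hu1']
          ring
        intro i
        exact (Finset.sum_eq_zero_iff_of_nonneg
          (fun i _ => mul_nonneg (hc.1 i) (by linarith [hs1 i]))).mp hsum i (Finset.mem_univ i)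
      have hAx : ∀ x, A.f x = ∑ i, p i * s i * (a i).f x := by
        intro x
        have := hAf x
        rw [hu1', one_mul] at this
        exact this
      have hAx' : ∀ x, A'.f x = ∑ i, p i * s i * (a' i).f x := by
        intro x
        have := hAf' x
        rw [hu1', one_mul] at this
        exact this
      have heq : μ = A := by
        apply Distr.ext'
        intro x
        rw [hμ x, hAx x]
        refine Finset.sum_congr rfl (fun i _ => ?_)
        rw [hz i, zero_mul]
        ring
      have heq' : μ' = A' := by
        apply Distr.ext'
        intro x
        rw [hμ' x, hAx' x]
        refine Finset.sum_congr rfl (fun i _ => ?_)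
        rw [hz i, zero_mul]
        ring
      rw [heq, heq']
      exact dstep_ptau hdA
    · have huu : u < 1 := lt_of_le_of_ne hu1 hu1'
      have hv0 : ∀ i, 0 ≤ p i * (1 - s i) / (1 - u) := fun i =>
        div_nonneg (mul_nonneg (hc.1 i) (by linarith [hs1 i])) (by linarith)
      have hv1 : ∑ i, p i * (1 - s i) / (1 - u) = 1 := by
        rw [← Finset.sum_div]
        have : ∑ i, p i * (1 - s i) = 1 - u := by
          have : ∑ i, p i * (1 - s i) = (∑ i, p i) - u := by
            rw [hudef, ← Finset.sum_sub_distrib]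
            exact Finset.sum_congr rfl (fun i _ => by ring)
          rw [this, hc.2.1]
        rw [this, div_self (by linarith)]
      set B := comboD _ hv0 hv1 b with hB
      have hBf : ∀ x, (1 - u) * B.f x = ∑ i, p i * (1 - s i) * (b i).f x := by
        intro x
        rw [hB, comboD_f, Finset.mul_sum]
        refine Finset.sum_congr rfl (fun i _ => ?_)
        exact cancel_helper (by linarith : (1:ℝ) - u ≠ 0)
      refine Or.inr ⟨u, A, B, A', hu0, hu1, fun x => ?_, fun x => ?_, hdA⟩
      · rw [hμ x, Finset.sum_add_distrib, ← hAf x, ← hBf x]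
      · rw [hμ' x, Finset.sum_add_distrib, ← hAf' x, ← hBf x]

/-- combining optional steps of components of a combination -/
theorem optStep_combo {I : Type} [Fintype I] {p : I → ℝ} {α : Act}
    {σ σ' : I → Distr (PE Act)} {μ μ' : Distr (PE Act)}
    (hc : IsCombo p σ μ) (hc' : IsCombo p σ' μ')
    (h : ∀ i, p i ≠ 0 → optStep τ (σ i) α (σ' i)) : optStep τ μ α μ' := by
  by_cases hτ : α = τ
  · subst hτ
    refine Or.inr ⟨rfl, ptau_combo hc hc' (fun i hi => ?_)⟩
    rcases h i hi with hd | ⟨_, hp⟩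
    · exact dstep_ptau hd
    · exact hp
  · refine Or.inl (dstep_combo hc hc' (fun i hi => ?_))
    rcases h i hi with hd | ⟨he, _⟩
    · exact hd
    · exact absurd he hτ

theorem IsMix.flip {X : Type} {s : ℝ} {a b c : Distr X} (h : IsMix s a b c) :
    IsMix (1 - s) b a c := by
  intro x
  rw [h x]
  ring

/-- partial silent steps lift along mixes (guarded binary combination) -/
theorem ptau_mix2 {s : ℝ} (h0 : 0 ≤ s) (h1 : s ≤ 1) {a b a' b' μ μ' : Distr (PE Act)}
    (hm : IsMix s a b μ) (hm' : IsMix s a' b' μ')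
    (ha : s ≠ 0 → ptau τ a a') (hb : s ≠ 1 → ptau τ b b') : ptau τ μ μ' := by
  refine ptau_combo (isCombo_of_isMix h0 h1 hm) (isCombo_of_isMix h0 h1 hm') ?_
  intro i hi
  cases i
  · simp only [Bool.false_eq_true, if_false] at hi ⊢
    exact hb (fun he => hi (by rw [he]; ring))
  · simp only [if_true] at hi ⊢
    exact ha hi

/-- weak silent steps lift along mixes in the first component -/
theorem wtau_mix_left {s : ℝ} (h0 : 0 ≤ s) (h1 : s ≤ 1) {a a' : Distr (PE Act)}
    (hw : wtau τ a a') :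
    ∀ b μ μ' : Distr (PE Act), IsMix s a b μ → IsMix s a' b μ' → wtau τ μ μ' := by
  induction hw with
  | refl =>
    intro b μ μ' hm hm'
    have : μ' = μ := Distr.ext' (fun x => by rw [hm x, hm' x])
    rw [this]
    exact Relation.ReflTransGen.refl
  | tail _ hstep ih =>
    intro b μ μ' hm hm'
    rename_i c d _
    have hmid : IsMix s c b (Distr.mix s h0 h1 c b) := fun x => rfl
    exact Relation.ReflTransGen.tail (ih b μ _ hm hmid)
      (ptau_mix2 h0 h1 hmid hm' (fun _ => hstep) (fun _ => ptau_refl τ b))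

/-- guarded binary combination of weak silent steps -/
theorem wtau_mix2 {s : ℝ} (h0 : 0 ≤ s) (h1 : s ≤ 1) {a b a' b' μ μ' : Distr (PE Act)}
    (hm : IsMix s a b μ) (hm' : IsMix s a' b' μ')
    (ha : s ≠ 0 → wtau τ a a') (hb : s ≠ 1 → wtau τ b b') : wtau τ μ μ' := by
  by_cases hs0 : s = 0
  · subst hs0
    have h₁ : μ = b := Distr.ext' (fun x => by rw [hm x]; ring)
    have h₂ : μ' = b' := Distr.ext' (fun x => by rw [hm' x]; ring)
    rw [h₁, h₂]
    exact hb one_ne_zero.symm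
  · by_cases hs1 : s = 1
    · subst hs1
      have h₁ : μ = a := Distr.ext' (fun x => by rw [hm x]; ring)
      have h₂ : μ' = a' := Distr.ext' (fun x => by rw [hm' x]; ring)
      rw [h₁, h₂]
      exact ha one_ne_zero
    · have hmid : IsMix s a' b (Distr.mix s h0 h1 a' b) := fun x => rfl
      refine Relation.ReflTransGen.trans
        (wtau_mix_left h0 h1 (ha hs0) b μ _ hm hmid) ?_
      refine wtau_mix_left (s := 1 - s) (by linarith) (by linarith) (hb hs1) a' _ μ'
        hmid.flip hm'.flip

/-- combining weak silent steps of components of a combination -/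
theorem wtau_combo : ∀ (n : ℕ) {p : Fin n → ℝ}
    {σ σ' : Fin n → Distr (PE Act)} {μ μ' : Distr (PE Act)},
    IsCombo p σ μ → IsCombo p σ' μ' →
    (∀ i, p i ≠ 0 → wtau τ (σ i) (σ' i)) → wtau τ μ μ' := by
  intro n
  induction n with
  | zero =>
    intro p σ σ' μ μ' hc _ _
    exact absurd hc.2.1 (by simp)
  | succ m ih =>
    intro p σ σ' μ μ' hc hc' h
    have hs0 : 0 ≤ p 0 := hc.1 0
    have hsum : p 0 + ∑ i : Fin m, p i.succ = 1 := by
      rw [← Fin.sum_univ_succ]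
      exact hc.2.1
    have hs1 : p 0 ≤ 1 := by
      have : 0 ≤ ∑ i : Fin m, p i.succ := Finset.sum_nonneg (fun i _ => hc.1 i.succ)
      linarith
    by_cases hp1 : p 0 = 1
    · -- tail weights vanish
      have hz : ∀ i : Fin m, p i.succ = 0 := by
        have h0 : ∑ i : Fin m, p i.succ = 0 := by linarith
        intro i
        exact (Finset.sum_eq_zero_iff_of_nonneg (fun i _ => hc.1 i.succ)).mp h0 i
          (Finset.mem_univ i)
      have h₁ : μ = σ 0 := by
        apply Distr.ext'
        intro x
        rw [hc.2.2 x, Fin.sum_univ_succ, hp1]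
        rw [Finset.sum_eq_zero (fun i _ => by rw [hz i, zero_mul])]
        ring
      have h₂ : μ' = σ' 0 := by
        apply Distr.ext'
        intro x
        rw [hc'.2.2 x, Fin.sum_univ_succ, hp1]
        rw [Finset.sum_eq_zero (fun i _ => by rw [hz i, zero_mul])]
        ring
      rw [h₁, h₂]
      exact h 0 (by rw [hp1]; exact one_ne_zero)
    · have hlt : p 0 < 1 := lt_of_le_of_ne hs1 hp1
      have hq0 : ∀ i : Fin m, 0 ≤ p i.succ / (1 - p 0) := fun i =>
        div_nonneg (hc.1 i.succ) (by linarith)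
      have hq1 : ∑ i : Fin m, p i.succ / (1 - p 0) = 1 := by
        rw [← Finset.sum_div]
        rw [show ∑ i : Fin m, p i.succ = 1 - p 0 by linarith]
        exact div_self (by linarith)
      set T := comboD _ hq0 hq1 (fun i : Fin m => σ i.succ) with hT
      set T' := comboD _ hq0 hq1 (fun i : Fin m => σ' i.succ) with hT'
      have hwT : wtau τ T T' := by
        refine ih (isCombo_comboD _ hq0 hq1 _) (isCombo_comboD _ hq0 hq1 _) ?_
        intro i hi
        refine h i.succ (fun hz => hi ?_)
        rw [hz, zero_div]
      have hmμ : IsMix (p 0) (σ 0) T μ := by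
        intro x
        rw [hc.2.2 x, Fin.sum_univ_succ, hT, comboD_f, Finset.mul_sum]
        congr 1
        refine Finset.sum_congr rfl (fun i _ => ?_)
        exact (cancel_helper (by linarith : (1:ℝ) - p 0 ≠ 0)).symm
      have hmμ' : IsMix (p 0) (σ' 0) T' μ' := by
        intro x
        rw [hc'.2.2 x, Fin.sum_univ_succ, hT', comboD_f, Finset.mul_sum]
        congr 1
        refine Finset.sum_congr rfl (fun i _ => ?_)
        exact (cancel_helper (by linarith : (1:ℝ) - p 0 ≠ 0)).symm
      exact wtau_mix2 hs0 hs1 hmμ hmμ' (fun hne => h 0 hne) (fun _ => hwT)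

end TauLemmas

section BBBasic

variable {Act : Type} {τ : Act}

theorem isBranchingBisim_eq :
    IsBranchingBisim τ (Eq : Distr (PE Act) → Distr (PE Act) → Prop) := by
  refine ⟨fun μ ν h => h.symm, ?_, ?_⟩
  · intro I hI p μs μ ν hR hc
    subst hR
    exact ⟨μ, μs, Relation.ReflTransGen.refl, rfl, hc, fun i => rfl⟩
  · intro μ ν α μ' hR hd
    subst hR
    exact ⟨μ, μ', Relation.ReflTransGen.refl, Or.inl hd, rfl, rfl⟩

theorem bb_refl (μ : Distr (PE Act)) : bb τ μ μ := ⟨Eq, isBranchingBisim_eq, rfl⟩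

theorem bb_symm {μ ν : Distr (PE Act)} (h : bb τ μ ν) : bb τ ν μ := by
  obtain ⟨R, hR, hμν⟩ := h
  exact ⟨R, hR, hR.1 hμν⟩

theorem bb_of_eq {μ ν : Distr (PE Act)} (h : μ = ν) : bb τ μ ν := h ▸ bb_refl μ

theorem bb_wd {μ ν : Distr (PE Act)} {I : Type} [hI : Fintype I]
    {p : I → ℝ} {μs : I → Distr (PE Act)}
    (h : bb τ μ ν) (hc : IsCombo p μs μ) :
    ∃ (ν' : Distr (PE Act)) (νs : I → Distr (PE Act)),
      wtau τ ν ν' ∧ bb τ μ ν' ∧ IsCombo p νs ν' ∧ ∀ i, bb τ (μs i) (νs i) := by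
  obtain ⟨R, hR, hμν⟩ := h
  obtain ⟨ν', νs, hw, hRν', hcν, hRs⟩ := hR.2.1 I hI p μs μ ν hμν hc
  exact ⟨ν', νs, hw, ⟨R, hR, hRν'⟩, hcν, fun i => ⟨R, hR, hRs i⟩⟩

theorem bb_transfer {μ ν μ' : Distr (PE Act)} {α : Act}
    (h : bb τ μ ν) (hd : dstep μ α μ') :
    ∃ ν' ν'', wtau τ ν ν' ∧ optStep τ ν' α ν'' ∧ bb τ μ ν' ∧ bb τ μ' ν'' := by
  obtain ⟨R, hR, hμν⟩ := h
  obtain ⟨ν', ν'', hw, ho, h1, h2⟩ := hR.2.2 μ ν α μ' hμν hd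
  exact ⟨ν', ν'', hw, ho, ⟨R, hR, h1⟩, ⟨R, hR, h2⟩⟩

end BBBasic

section Coupling

variable {X : Type}

theorem Distr.mem_suppF {μ : Distr X} {x : X} : x ∈ μ.suppF ↔ μ.f x ≠ 0 := by
  rw [Distr.suppF, Set.Finite.mem_toFinset, Function.mem_support]

/-- common refinement of two decompositions of the same distribution -/
theorem coupling {K J : Type} [Fintype K] [Fintype J] {w : K → ℝ} {σs : K → Distr X}
    {p : J → ℝ} {μs : J → Distr X} {μ : Distr X}
    (hcw : IsCombo w σs μ) (hcp : IsCombo p μs μ) :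
    ∃ (t : K → J → ℝ) (ξ : K → J → Distr X),
      (∀ k j, 0 ≤ t k j) ∧
      (∀ k, ∑ j, t k j = w k) ∧
      (∀ j, ∑ k, t k j = p j) ∧
      (∀ k x, w k * (σs k).f x = ∑ j, t k j * (ξ k j).f x) ∧
      (∀ j x, p j * (μs j).f x = ∑ k, t k j * (ξ k j).f x) := by
  classical
  set g : K → J → X → ℝ :=
    fun k j x => w k * (σs k).f x * (p j * (μs j).f x) / μ.f x with hgdef
  have hg0 : ∀ k j x, 0 ≤ g k j x := fun k j x => by
    apply div_nonneg _ (μ.nonneg x)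
    exact mul_nonneg (mul_nonneg (hcw.1 k) ((σs k).nonneg x))
      (mul_nonneg (hcp.1 j) ((μs j).nonneg x))
  have hgsupp : ∀ k j x, μ.f x = 0 → g k j x = 0 := by
    intro k j x hx
    rw [hgdef]
    simp [hx]
  set t : K → J → ℝ := fun k j => ∑ x ∈ μ.suppF, g k j x with htdef
  have ht0 : ∀ k j, 0 ≤ t k j := fun k j =>
    Finset.sum_nonneg fun x _ => hg0 k j x
  have hσsupp : ∀ k x, w k ≠ 0 → μ.f x = 0 → (σs k).f x = 0 := by
    intro k x hk hx
    have h1 := hcw.le k x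
    have hw : 0 < w k := lt_of_le_of_ne (hcw.1 k) (Ne.symm hk)
    nlinarith [(σs k).nonneg x]
  have hμsupp : ∀ j x, p j ≠ 0 → μ.f x = 0 → (μs j).f x = 0 := by
    intro j x hj hx
    have h1 := hcp.le j x
    have hp : 0 < p j := lt_of_le_of_ne (hcp.1 j) (Ne.symm hj)
    nlinarith [(μs j).nonneg x]
  have hrow : ∀ k x, ∑ j, g k j x = w k * (σs k).f x * (μ.f x / μ.f x) := by
    intro k x
    have he : ∀ j, g k j x = (w k * (σs k).f x / μ.f x) * (p j * (μs j).f x) := by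
      intro j
      rw [hgdef]
      ring
    rw [Finset.sum_congr rfl (fun j _ => he j), ← Finset.mul_sum, ← hcp.2.2 x]
    ring
  have hcol : ∀ j x, ∑ k, g k j x = p j * (μs j).f x * (μ.f x / μ.f x) := by
    intro j x
    have he : ∀ k, g k j x = (p j * (μs j).f x / μ.f x) * (w k * (σs k).f x) := by
      intro k
      rw [hgdef]
      ring
    rw [Finset.sum_congr rfl (fun k _ => he k), ← Finset.mul_sum, ← hcw.2.2 x]
    ring
  have hrowsum : ∀ k, ∑ j, t k j = w k := by
    intro k
    have h1 : ∑ j, t k j = ∑ x ∈ μ.suppF, ∑ j, g k j x := by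
      rw [htdef]
      exact Finset.sum_comm
    rw [h1, Finset.sum_congr rfl (fun x hx => by
      rw [hrow k x, div_self (Distr.mem_suppF.mp hx), mul_one])]
    by_cases hk : w k = 0
    · rw [hk]
      simp
    · rw [← Finset.mul_sum, (σs k).sum_finset μ.suppF (by
        intro x hx
        exact Distr.mem_suppF.mpr (fun h0 => hx (hσsupp k x hk h0))), mul_one]
  have hcolsum : ∀ j, ∑ k, t k j = p j := by
    intro j
    have h1 : ∑ k, t k j = ∑ x ∈ μ.suppF, ∑ k, g k j x := by
      rw [htdef]
      exact Finset.sum_comm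
    rw [h1, Finset.sum_congr rfl (fun x hx => by
      rw [hcol j x, div_self (Distr.mem_suppF.mp hx), mul_one])]
    by_cases hj : p j = 0
    · rw [hj]
      simp
    · rw [← Finset.mul_sum, (μs j).sum_finset μ.suppF (by
        intro x hx
        exact Distr.mem_suppF.mpr (fun h0 => hx (hμsupp j x hj h0))), mul_one]
  have hgz : ∀ k j, t k j = 0 → ∀ x, g k j x = 0 := by
    intro k j ht x
    by_cases hx : μ.f x = 0
    · exact hgsupp k j x hx
    · have ht' : ∑ y ∈ μ.suppF, g k j y = 0 := ht
      exact (Finset.sum_eq_zero_iff_of_nonneg (fun y _ => hg0 k j y)).mp ht' x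
        (Distr.mem_suppF.mpr hx)
  have hξex : ∀ k j, ∃ ξ : Distr X, ∀ x, t k j * ξ.f x = g k j x := by
    intro k j
    by_cases ht : t k j = 0
    · exact ⟨μ, fun x => by rw [ht, zero_mul, hgz k j ht x]⟩
    · have hgfin : (Function.support (fun x => g k j x / t k j)).Finite := by
        apply Set.Finite.subset μ.fin
        intro x hx
        simp only [Function.mem_support] at hx ⊢
        intro h0
        rw [hgsupp k j x h0, zero_div] at hx
        exact hx rfl
      refine ⟨⟨fun x => g k j x / t k j, fun x => div_nonneg (hg0 k j x) (ht0 k j), hgfin, ?_⟩,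
        fun x => by rw [mul_comm, div_mul_cancel₀ _ ht]⟩
      rw [finsum_eq_sum_of_support_subset _ (s := μ.suppF) (by
        intro x hx
        simp only [Function.mem_support] at hx
        apply Finset.mem_coe.mpr
        refine Distr.mem_suppF.mpr (fun h0 => hx ?_)
        rw [hgsupp k j x h0, zero_div])]
      rw [← Finset.sum_div]
      have : ∑ x ∈ μ.suppF, g k j x = t k j := rfl
      rw [this, div_self ht]
  choose ξ hξ using hξex
  refine ⟨t, ξ, ht0, hrowsum, hcolsum, fun k x => ?_, fun j x => ?_⟩
  · rw [Finset.sum_congr rfl (fun j _ => hξ k j x), hrow k x]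
    by_cases hx : μ.f x = 0
    · rw [hx, zero_div, mul_zero]
      by_cases hk : w k = 0
      · rw [hk, zero_mul]
      · rw [hσsupp k x hk hx, mul_zero]
    · rw [div_self hx, mul_one]
  · rw [Finset.sum_congr rfl (fun k _ => hξ k j x), hcol j x]
    by_cases hx : μ.f x = 0
    · rw [hx, zero_div, mul_zero]
      by_cases hj : p j = 0
      · rw [hj, zero_mul]
      · rw [hμsupp j x hj hx, mul_zero]
    · rw [div_self hx, mul_one]

end Coupling

section Convexity

variable {Act : Type} {τ : Act}

/-- convex combinations of branching bisimilar pairs -/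
def cvxbb (τ : Act) (μ ν : Distr (PE Act)) : Prop :=
  ∃ (n : ℕ) (q : Fin n → ℝ) (σs ρs : Fin n → Distr (PE Act)),
    IsCombo q σs μ ∧ IsCombo q ρs ν ∧ ∀ k, q k ≠ 0 → bb τ (σs k) (ρs k)

theorem cvxbb_refl (μ : Distr (PE Act)) : cvxbb τ μ μ :=
  ⟨1, fun _ => 1, fun _ => μ, fun _ => μ,
    IsCombo.const (fun _ => zero_le_one) (by simp) μ,
    IsCombo.const (fun _ => zero_le_one) (by simp) μ, fun _ _ => bb_refl μ⟩

theorem isBranchingBisim_cvxbb : IsBranchingBisim τ (cvxbb τ) := by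
  refine ⟨?_, ?_, ?_⟩
  · -- symmetric
    rintro μ ν ⟨n, q, σs, ρs, hcμ, hcν, hbb⟩
    exact ⟨n, q, ρs, σs, hcν, hcμ, fun k hk => bb_symm (hbb k hk)⟩
  · -- weakly decomposable
    rintro J hJ p μsJ μ ν ⟨n, q, σs, ρs, hcμ, hcν, hbb⟩ hcp
    obtain ⟨t, ξ, ht0, hrow, hcol, hk_id, hj_id⟩ := coupling hcμ hcp
    have htle_q : ∀ k j, t k j ≤ q k := by
      intro k j
      rw [← hrow k]
      exact Finset.single_le_sum (fun j _ => ht0 k j) (Finset.mem_univ j)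
    have htle_p : ∀ k j, t k j ≤ p j := by
      intro k j
      rw [← hcol j]
      exact Finset.single_le_sum (fun k _ => ht0 k j) (Finset.mem_univ k)
    have hex : ∀ k, ∃ (ρ' : Distr (PE Act)) (ρj : J → Distr (PE Act)),
        wtau τ (ρs k) ρ' ∧ (q k ≠ 0 → bb τ (σs k) ρ') ∧
        (∀ x, q k * ρ'.f x = ∑ j, t k j * (ρj j).f x) ∧
        (∀ j, t k j ≠ 0 → bb τ (ξ k j) (ρj j)) := by
      intro k
      by_cases hk : q k = 0
      · refine ⟨ρs k, ξ k, Relation.ReflTransGen.refl, fun h => absurd hk h, fun x => ?_,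
          fun j hj => absurd (le_antisymm (hk ▸ htle_q k j) (ht0 k j)) hj⟩
        rw [hk, zero_mul]
        refine (Finset.sum_eq_zero (fun j _ => ?_)).symm
        rw [le_antisymm (hk ▸ htle_q k j) (ht0 k j), zero_mul]
      · have hcξ : IsCombo (fun j => t k j / q k) (ξ k) (σs k) := by
          refine ⟨fun j => div_nonneg (ht0 k j) (hcμ.1 k), ?_, fun x => ?_⟩
          · rw [← Finset.sum_div, hrow k, div_self hk]
          · have h2 : ∑ j, (t k j / q k) * (ξ k j).f x = (σs k).f x := by
              rw [Finset.sum_congr rfl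
                (fun j (_ : j ∈ Finset.univ) => (by ring :
                  (t k j / q k) * (ξ k j).f x = (t k j * (ξ k j).f x) / q k)),
                ← Finset.sum_div, ← hk_id k x, mul_comm, mul_div_assoc, div_self hk, mul_one]
            exact h2.symm
        obtain ⟨ρ', ρj, hw, hbb', hcρ, hbbj⟩ := bb_wd (hbb k hk) hcξ
        refine ⟨ρ', ρj, hw, fun _ => hbb', fun x => ?_, fun j hj => hbbj j⟩
        rw [hcρ.2.2 x, Finset.mul_sum]
        exact Finset.sum_congr rfl (fun j _ => by
          rw [← mul_assoc, mul_div_cancel₀ _ hk])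
    choose ρ' ρj hw hbb' hpt hbbj using hex
    have hq0 := hcν.1
    have hq1 := hcν.2.1
    set ν' := comboD q hq0 hq1 ρ' with hν'
    have hνex : ∀ j, ∃ νj : Distr (PE Act), cvxbb τ (μsJ j) νj ∧
        (∀ x, p j * νj.f x = ∑ k, t k j * (ρj k j).f x) := by
      intro j
      by_cases hj : p j = 0
      · refine ⟨μsJ j, cvxbb_refl _, fun x => ?_⟩
        rw [hj, zero_mul]
        refine (Finset.sum_eq_zero (fun k _ => ?_)).symm
        rw [le_antisymm (hj ▸ htle_p k j) (ht0 k j), zero_mul]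
      · have hw0 : ∀ k, 0 ≤ t k j / p j := fun k => div_nonneg (ht0 k j) (hcp.1 j)
        have hw1 : ∑ k, t k j / p j = 1 := by
          rw [← Finset.sum_div, hcol j, div_self hj]
        refine ⟨comboD _ hw0 hw1 (fun k => ρj k j), ?_, fun x => ?_⟩
        · refine ⟨n, fun k => t k j / p j, fun k => ξ k j, fun k => ρj k j, ?_,
            isCombo_comboD _ hw0 hw1 _, fun k hk => ?_⟩
          · refine ⟨hw0, hw1, fun x => ?_⟩
            have h2 : ∑ k, (t k j / p j) * (ξ k j).f x = (μsJ j).f x := by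
              rw [Finset.sum_congr rfl
                (fun k (_ : k ∈ Finset.univ) => (by ring :
                  (t k j / p j) * (ξ k j).f x = (t k j * (ξ k j).f x) / p j)),
                ← Finset.sum_div, ← hj_id j x, mul_comm, mul_div_assoc, div_self hj, mul_one]
            exact h2.symm
          · refine hbbj k j (fun hz => hk ?_)
            show t k j / p j = 0
            rw [hz, zero_div]
        · rw [comboD_f, Finset.mul_sum]
          exact Finset.sum_congr rfl (fun k _ => by
            rw [← mul_assoc, mul_div_cancel₀ _ hj])
    choose νs hcvx hνpt using hνex
    refine ⟨ν', νs, ?_, ?_, ⟨hcp.1, hcp.2.1, fun x => ?_⟩, hcvx⟩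
    · exact wtau_combo n hcν (isCombo_comboD q hq0 hq1 ρ') (fun k _ => hw k)
    · exact ⟨n, q, σs, ρ', hcμ, isCombo_comboD q hq0 hq1 ρ', fun k hk => hbb' k hk⟩
    · -- ν'.f x = ∑ j, p j * (νs j).f x
      rw [hν', comboD_f]
      rw [Finset.sum_congr rfl (fun j (_ : j ∈ Finset.univ) => hνpt j x)]
      rw [Finset.sum_comm]
      exact Finset.sum_congr rfl (fun k _ => hpt k x)
  · -- transfer
    rintro μ ν α μ' ⟨n, q, σs, ρs, hcμ, hcν, hbb⟩ hd
    obtain ⟨σs', hcμ', hdk⟩ := dstep_decompose hcμ hd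
    have hex : ∀ k, ∃ ρ' ρ'', wtau τ (ρs k) ρ' ∧
        (q k ≠ 0 → optStep τ ρ' α ρ'' ∧ bb τ (σs k) ρ' ∧ bb τ (σs' k) ρ'') := by
      intro k
      by_cases hk : q k = 0
      · exact ⟨ρs k, ρs k, Relation.ReflTransGen.refl, fun h => absurd hk h⟩
      · obtain ⟨ρ', ρ'', hw, ho, h1, h2⟩ := bb_transfer (hbb k hk) (hdk k hk)
        exact ⟨ρ', ρ'', hw, fun _ => ⟨ho, h1, h2⟩⟩
    choose ρ' ρ'' hw hrest using hex
    have hq0 := hcν.1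
    have hq1 := hcν.2.1
    refine ⟨comboD q hq0 hq1 ρ', comboD q hq0 hq1 ρ'', ?_, ?_, ?_, ?_⟩
    · exact wtau_combo n hcν (isCombo_comboD q hq0 hq1 ρ') (fun k _ => hw k)
    · exact optStep_combo (isCombo_comboD q hq0 hq1 ρ') (isCombo_comboD q hq0 hq1 ρ'')
        (fun k hk => (hrest k hk).1)
    · exact ⟨n, q, σs, ρ', hcμ, isCombo_comboD q hq0 hq1 ρ', fun k hk => (hrest k hk).2.1⟩
    · exact ⟨n, q, σs', ρ'', hcμ', isCombo_comboD q hq0 hq1 ρ'', fun k hk => (hrest k hk).2.2⟩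

theorem cvxbb_bb {μ ν : Distr (PE Act)} (h : cvxbb τ μ ν) : bb τ μ ν :=
  ⟨cvxbb τ, isBranchingBisim_cvxbb, h⟩

/-- branching bisimilarity is closed under convex combinations -/
theorem bb_combo {I : Type} [Fintype I] {p : I → ℝ} {σs ρs : I → Distr (PE Act)}
    {μ ν : Distr (PE Act)} (hc : IsCombo p σs μ) (hc' : IsCombo p ρs ν)
    (h : ∀ i, p i ≠ 0 → bb τ (σs i) (ρs i)) : bb τ μ ν := by
  apply cvxbb_bb
  exact ⟨Fintype.card I, p ∘ (Fintype.equivFin I).symm, σs ∘ (Fintype.equivFin I).symm,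
    ρs ∘ (Fintype.equivFin I).symm, hc.reindex _, hc'.reindex _, fun k hk => h _ hk⟩

/-- branching bisimilarity is closed under binary mixes -/
theorem bb_mix2 {s : ℝ} (h0 : 0 ≤ s) (h1 : s ≤ 1) {a b a' b' μ ν : Distr (PE Act)}
    (hm : IsMix s a b μ) (hm' : IsMix s a' b' ν)
    (ha : s ≠ 0 → bb τ a a') (hb : s ≠ 1 → bb τ b b') : bb τ μ ν := by
  refine bb_combo (isCombo_of_isMix h0 h1 hm) (isCombo_of_isMix h0 h1 hm') ?_
  intro i hi
  cases i
  · simp only [Bool.false_eq_true, if_false] at hi ⊢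
    exact hb (fun he => hi (by rw [he]; ring))
  · simp only [if_true] at hi ⊢
    exact ha hi

end Convexity

section Main

variable {Act : Type} {τ : Act}

theorem Distr.eq_dirac_of_one {X : Type} {μ : Distr X} {F : X} (h : μ.f F = 1) :
    μ = Distr.dirac F := by
  apply eq_dirac_of_support
  intro y hy
  classical
  set S : Finset X := insert y (insert F μ.suppF) with hS
  have h1 : ∑ x ∈ S, μ.f x = 1 := μ.sum_finset' S (by
    intro x hx
    exact Finset.mem_insert_of_mem (Finset.mem_insert_of_mem hx))
  have hyS : y ∈ S := Finset.mem_insert_self y _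
  have hFS : F ∈ S.erase y := Finset.mem_erase.mpr
    ⟨fun he => hy he.symm, Finset.mem_insert_of_mem (Finset.mem_insert_self F _)⟩
  have h2 : μ.f y + ∑ x ∈ S.erase y, μ.f x = ∑ x ∈ S, μ.f x :=
    Finset.add_sum_erase S μ.f hyS
  have h3 : μ.f F ≤ ∑ x ∈ S.erase y, μ.f x :=
    Finset.single_le_sum (fun x _ => μ.nonneg x) hFS
  have := μ.nonneg y
  linarith

theorem Distr.dirac_inj {X : Type} {a b : X} (h : Distr.dirac a = Distr.dirac b) : a = b := by
  by_contra hne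
  have := congrArg (fun d : Distr X => d.f a) h
  simp only [Distr.dirac_f, if_pos rfl, if_neg hne] at this
  exact one_ne_zero this

theorem exists_ne_zero_of_sum_one {I : Type} [Fintype I] {q : I → ℝ}
    (h : ∑ i, q i = 1) : ∃ i, q i ≠ 0 := by
  by_contra hc
  push_neg at hc
  rw [Finset.sum_eq_zero (fun i _ => hc i)] at h
  exact zero_ne_one h

theorem pstep_pre_inv {Act : Type} {β α : Act} {P' : PP Act} {m : Distr (PE Act)}
    (h : pstep (PE.pre β P') α m) : α = β ∧ m = den P' := by
  cases h
  exact ⟨rfl, rfl⟩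

theorem pstep_plus_inv {Act : Type} {E₁ E₂ : PE Act} {α : Act} {m : Distr (PE Act)}
    (h : pstep (PE.plus E₁ E₂) α m) : pstep E₁ α m ∨ pstep E₂ α m := by
  cases h with
  | left h => exact Or.inl h
  | right h => exact Or.inr h

/-- binary guarded combination of optional steps -/
theorem optStep_mix2 {s : ℝ} (h0 : 0 ≤ s) (h1 : s ≤ 1) {α : Act}
    {a b a' b' μ μ' : Distr (PE Act)}
    (hm : IsMix s a b μ) (hm' : IsMix s a' b' μ')
    (ha : s ≠ 0 → optStep τ a α a') (hb : s ≠ 1 → optStep τ b α b') :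
    optStep τ μ α μ' := by
  refine optStep_combo (isCombo_of_isMix h0 h1 hm) (isCombo_of_isMix h0 h1 hm') ?_
  intro i hi
  cases i
  · simp only [Bool.false_eq_true, if_false] at hi ⊢
    exact hb (fun he => hi (by rw [he]; ring))
  · simp only [if_true] at hi ⊢
    exact ha hi

variable (τ) in
/-- the distinguished pair relation used for soundness of BP -/
def Tpair (E : PE Act) (P : PP Act) (μ ν : Distr (PE Act)) : Prop :=
  ∃ (a : ℝ) (ξ ξ' : Distr (PE Act)), 0 ≤ a ∧ a ≤ 1 ∧ bb τ ξ ξ' ∧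
    IsMix a (Distr.dirac (.plus E (.pre τ P))) ξ μ ∧ IsMix a (den P) ξ' ν

variable (τ) in
def Rbig (E : PE Act) (P : PP Act) (μ ν : Distr (PE Act)) : Prop :=
  bb τ μ ν ∨ Tpair τ E P μ ν ∨ Tpair τ E P ν μ

section FixEP

variable {E : PE Act} {P : PP Act} (hsq : sq τ E P)

local notation "F" => PE.plus E (PE.pre τ P)
local notation "δF" => Distr.dirac (PE.plus E (PE.pre τ P))
local notation "π" => den P

theorem dstep_dF_pi : dstep (δF) τ (π) :=
  dstep_of_pstep (pstep.right (pstep.pre τ P))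

include hsq in
/-- every transition of `∂(E + τ.P)` is matched by an optional transition of `⟦P⟧` -/
theorem match_dF {α : Act} {μ' : Distr (PE Act)} (hd : dstep (δF) α μ') :
    ∃ ζ, optStep τ (π) α ζ ∧ bb τ μ' ζ := by
  obtain ⟨n, q, Es, ms, hA, hB, hC⟩ := dstep_fin hd
  have hEs : ∀ j, q j ≠ 0 → Es j = F := by
    intro j hj
    have := hA.dirac_comp (lt_of_le_of_ne (hA.1 j) (Ne.symm hj))
    exact Distr.dirac_inj this
  have hex : ∀ j, ∃ ζj, q j ≠ 0 → optStep τ (π) α ζj ∧ bb τ (ms j) ζj := by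
    intro j
    by_cases hj : q j = 0
    · exact ⟨ms j, fun h => absurd hj h⟩
    · have hp : pstep F α (ms j) := by
        have := hC j
        rwa [hEs j hj] at this
      rcases pstep_plus_inv hp with hE | hpre
      · exact
          let ⟨ζ, hζ⟩ := hsq α (ms j) hE
          ⟨ζ, fun _ => hζ⟩
      · obtain ⟨heq, hms⟩ := pstep_pre_inv hpre
        exact ⟨π, fun _ => ⟨Or.inr ⟨heq, ptau_refl τ (π)⟩, bb_of_eq hms⟩⟩
  choose ζs hζ using hex
  have hq0 := hB.1
  have hq1 := hB.2.1
  refine ⟨comboD q hq0 hq1 ζs, ?_, ?_⟩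
  · exact optStep_combo (IsCombo.const hq0 hq1 (π)) (isCombo_comboD q hq0 hq1 ζs)
      (fun j hj => (hζ j hj).1)
  · exact bb_combo hB (isCombo_comboD q hq0 hq1 ζs) (fun j hj => (hζ j hj).2)

include hsq in
theorem isBranchingBisim_Rbig : IsBranchingBisim τ (Rbig τ E P) := by
  constructor
  · -- symmetric
    rintro μ ν (hbb | hT | hT)
    · exact Or.inl (bb_symm hbb)
    · exact Or.inr (Or.inr hT)
    · exact Or.inr (Or.inl hT)
  constructor
  · -- weakly decomposable
    rintro J hJ p μs μ ν hR hcp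
    have bbcase : ∀ {μ₀ ν₀ : Distr (PE Act)}, bb τ μ₀ ν₀ → wtau τ ν ν₀ → IsCombo p μs μ₀ → μ = μ₀ →
        ∃ (ν' : Distr (PE Act)) (νs : J → Distr (PE Act)),
          wtau τ ν ν' ∧ Rbig τ E P μ ν' ∧ IsCombo p νs ν' ∧ ∀ i, Rbig τ E P (μs i) (νs i) := by
      intro μ₀ ν₀ hbb hw hc heq
      obtain ⟨ν', νs, hw', hbb', hcν, hbbs⟩ := bb_wd hbb hc
      exact ⟨ν', νs, Relation.ReflTransGen.trans hw hw', Or.inl (heq ▸ hbb'), hcν,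
        fun i => Or.inl (hbbs i)⟩
    rcases hR with hbb | ⟨a, ξ, ξ', ha0, ha1, hbb, hmμ, hmν⟩ | ⟨a, ξ, ξ', ha0, ha1, hbb, hmν, hmμ⟩
    · exact bbcase hbb Relation.ReflTransGen.refl hcp rfl
    · -- μ = a·δF + (1-a)·ξ, ν = a·π + (1-a)·ξ'
      by_cases haz : a = 0
      · subst haz
        have heμ : μ = ξ := Distr.ext' (fun x => by rw [hmμ x]; ring)
        have heν : ν = ξ' := Distr.ext' (fun x => by rw [hmν x]; ring)
        exact bbcase (heμ ▸ heν ▸ hbb) Relation.ReflTransGen.refl (heμ ▸ hcp) rfl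
      by_cases hao : a = 1
      · subst hao
        have heμ : μ = δF := Distr.ext' (fun x => by rw [hmμ x]; ring)
        classical
        refine ⟨ν, fun j => if p j = 0 then μs j else ν, Relation.ReflTransGen.refl,
          Or.inr (Or.inl ⟨1, ξ, ξ', ha0, ha1, hbb, hmμ, hmν⟩), ⟨hcp.1, hcp.2.1, fun x => ?_⟩,
          fun j => ?_⟩
        · have : ∀ j, p j * (if p j = 0 then μs j else ν).f x = p j * ν.f x := by
            intro j
            by_cases hj : p j = 0
            · rw [hj]; ring
            · rw [if_neg hj]
          rw [Finset.sum_congr rfl (fun j _ => this j), ← Finset.sum_mul, hcp.2.1, one_mul]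
        · show Rbig τ E P (μs j) (if p j = 0 then μs j else ν)
          by_cases hj : p j = 0
          · rw [if_pos hj]; exact Or.inl (bb_refl _)
          · rw [if_neg hj]
            have hcp' : IsCombo p μs (δF) := heμ ▸ hcp
            have hμsj : μs j = δF :=
              hcp'.dirac_comp (lt_of_le_of_ne (hcp.1 j) (Ne.symm hj))
            refine Or.inr (Or.inl ⟨1, ξ, ξ', ha0, ha1, hbb, ?_, hmν⟩)
            rw [hμsj]
            intro x; ring
      · -- 0 < a < 1 : attribution argument
        have hapos : 0 < a := lt_of_le_of_ne ha0 (Ne.symm haz)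
        have halt : a < 1 := lt_of_le_of_ne ha1 hao
        have hμF : a ≤ μ.f F := by
          have := hmμ F
          rw [Distr.dirac_self] at this
          nlinarith [ξ.nonneg F]
        have hμFpos : 0 < μ.f F := lt_of_lt_of_le hapos hμF
        -- per-component attribution
        have hex : ∀ j, ∃ (aj : ℝ) (ξj : Distr (PE Act)), 0 ≤ aj ∧ aj ≤ 1 ∧
            (∀ y, (μs j).f y = aj * (δF).f y + (1 - aj) * ξj.f y) ∧
            aj = a * (μs j).f F / μ.f F := by
          intro j
          set aj := a * (μs j).f F / μ.f F with hajdef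
          have haj0 : 0 ≤ aj := div_nonneg (mul_nonneg ha0 ((μs j).nonneg F)) (μ.nonneg F)
          have haj1 : aj ≤ 1 := by
            rw [hajdef, div_le_one hμFpos]
            nlinarith [(μs j).le_one F, hμF, (μs j).nonneg F]
          have hajle : aj ≤ (μs j).f F := by
            rw [hajdef, div_le_iff₀ hμFpos]
            nlinarith [(μs j).nonneg F, hμF]
          by_cases h1 : aj = 1
          · -- μs j is the Dirac distribution
            have : (μs j).f F = 1 := le_antisymm ((μs j).le_one F) (h1 ▸ hajle)
            have heq : μs j = δF := Distr.eq_dirac_of_one this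
            exact ⟨aj, ξ, haj0, haj1, fun y => by rw [heq, h1]; ring, hajdef⟩
          · have h1lt : aj < 1 := lt_of_le_of_ne haj1 h1
            have hd0 : (0:ℝ) < 1 - aj := by linarith
            -- the residue distribution
            refine ⟨aj, ⟨fun y => ((μs j).f y - aj * (δF).f y) / (1 - aj), ?_, ?_, ?_⟩,
              haj0, haj1, fun y => ?_, hajdef⟩
            · intro y
              apply div_nonneg _ (le_of_lt hd0)
              rcases eq_or_ne y F with rfl | hy
              · rw [Distr.dirac_self]; linarith
              · rw [Distr.dirac_f, if_neg hy]
                have := (μs j).nonneg y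
                linarith
            · apply Set.Finite.subset ((μs j).fin.union (Set.finite_singleton F))
              intro y hy
              simp only [Function.mem_support] at hy
              by_contra hc
              simp only [Set.mem_union, Function.mem_support, not_or, not_not,
                Set.mem_singleton_iff] at hc
              apply hy
              rw [hc.1, Distr.dirac_f, if_neg hc.2]
              simp
            · -- sums to one
              rw [finsum_eq_sum_of_support_subset _
                (s := insert F (μs j).suppF) (by
                  intro y hy
                  simp only [Function.mem_support] at hy
                  by_contra hc
                  simp only [Finset.coe_insert, Set.mem_insert_iff, Finset.mem_coe,
                    not_or] at hc
                  apply hy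
                  rw [Distr.dirac_f, if_neg hc.1,
                    (by by_contra hz; exact hc.2 (Distr.mem_suppF.mpr hz) : (μs j).f y = 0)]
                  simp)]
              have hsub : ∑ y ∈ insert F (μs j).suppF, ((μs j).f y - aj * (δF).f y) / (1 - aj)
                  = ((∑ y ∈ insert F (μs j).suppF, (μs j).f y)
                    - aj * (∑ y ∈ insert F (μs j).suppF, (δF).f y)) / (1 - aj) := by
                rw [← Finset.sum_div, Finset.sum_sub_distrib, ← Finset.mul_sum]
              rw [hsub, (μs j).sum_finset' _ (Finset.subset_insert _ _),
                (Distr.dirac F).sum_finset' _ (by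
                  intro y hy
                  have : y = F := by
                    by_contra hc
                    have := Distr.mem_suppF.mp hy
                    rw [Distr.dirac_f, if_neg hc] at this
                    exact this rfl
                  rw [this]
                  exact Finset.mem_insert_self F _), mul_one, div_self (ne_of_gt hd0)]
            · simp only
              rw [Distr.dirac_f]
              field_simp
              ring
        choose aj ξj haj0 haj1 hmixj hajdef using hex
        -- total attributed mass equals a
        have hsuma : ∑ j, p j * aj j = a := by
          have : ∀ j, p j * aj j = (a / μ.f F) * (p j * (μs j).f F) := by
            intro j
            rw [hajdef j]
            ring
          rw [Finset.sum_congr rfl (fun j _ => this j), ← Finset.mul_sum, ← hcp.2.2 F]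
          field_simp
        -- the residues decompose ξ
        have hq0 : ∀ j, 0 ≤ p j * (1 - aj j) / (1 - a) := fun j =>
          div_nonneg (mul_nonneg (hcp.1 j) (by linarith [haj1 j])) (by linarith)
        have hq1 : ∑ j, p j * (1 - aj j) / (1 - a) = 1 := by
          rw [← Finset.sum_div]
          have : ∑ j, p j * (1 - aj j) = 1 - a := by
            have h2 : ∑ j, p j * (1 - aj j) = (∑ j, p j) - ∑ j, p j * aj j := by
              rw [← Finset.sum_sub_distrib]
              exact Finset.sum_congr rfl (fun j _ => by ring)
            rw [h2, hcp.2.1, hsuma]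
          rw [this, div_self (by linarith)]
        have hcξ : IsCombo (fun j => p j * (1 - aj j) / (1 - a)) ξj ξ := by
          refine ⟨hq0, hq1, fun y => ?_⟩
          have hkey : (1 - a) * ξ.f y = ∑ j, p j * (1 - aj j) * (ξj j).f y := by
            have h2 : ∀ j, p j * (μs j).f y
                = p j * aj j * (δF).f y + p j * (1 - aj j) * (ξj j).f y := by
              intro j
              rw [hmixj j y]
              ring
            have h3 : μ.f y = (∑ j, p j * aj j) * (δF).f y
                + ∑ j, p j * (1 - aj j) * (ξj j).f y := by
              rw [hcp.2.2 y, Finset.sum_congr rfl (fun j _ => h2 j),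
                Finset.sum_add_distrib, Finset.sum_mul]
            rw [hsuma] at h3
            have h4 := hmμ y
            linarith
          have h5 : ∀ j, p j * (1 - aj j) / (1 - a) * (ξj j).f y
              = (p j * (1 - aj j) * (ξj j).f y) / (1 - a) := fun j => by ring
          rw [Finset.sum_congr rfl (fun j _ => h5 j), ← Finset.sum_div, ← hkey,
            mul_comm, mul_div_assoc, div_self (by linarith : (1:ℝ) - a ≠ 0), mul_one]
        obtain ⟨ξ'', ξjs', hwξ, hbbξ, hcξ', hbbjs⟩ := bb_wd hbb hcξ
        set ν' := Distr.mix a ha0 ha1 (π) ξ'' with hν'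
        have hmν' : IsMix a (π) ξ'' ν' := fun x => rfl
        refine ⟨ν', fun j => Distr.mix (aj j) (haj0 j) (haj1 j) (π) (ξjs' j), ?_, ?_, ?_, ?_⟩
        · exact wtau_mix2 ha0 ha1 hmν hmν' (fun _ => Relation.ReflTransGen.refl)
            (fun _ => hwξ)
        · exact Or.inr (Or.inl ⟨a, ξ, ξ'', ha0, ha1, hbbξ, hmμ, hmν'⟩)
        · refine ⟨hcp.1, hcp.2.1, fun y => ?_⟩
          have h6 : ∀ j, p j * (Distr.mix (aj j) (haj0 j) (haj1 j) (π) (ξjs' j)).f y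
              = p j * aj j * (π).f y + (1 - a) * (p j * (1 - aj j) / (1 - a)) * (ξjs' j).f y := by
            intro j
            have : (Distr.mix (aj j) (haj0 j) (haj1 j) (π) (ξjs' j)).f y
                = aj j * (π).f y + (1 - aj j) * (ξjs' j).f y := rfl
            rw [this]
            have hc : (1 - a) * (p j * (1 - aj j) / (1 - a)) = p j * (1 - aj j) := by
              rw [mul_comm, div_mul_cancel₀ _ (by linarith : (1:ℝ) - a ≠ 0)]
            rw [hc]
            ring
          rw [Finset.sum_congr rfl (fun j _ => h6 j), Finset.sum_add_distrib]
          have h7 : ∑ j, p j * aj j * (π).f y = a * (π).f y := by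
            rw [← Finset.sum_mul, hsuma]
          have h8 : ∑ j, (1 - a) * (p j * (1 - aj j) / (1 - a)) * (ξjs' j).f y
              = (1 - a) * ξ''.f y := by
            have : ∀ j, (1 - a) * (p j * (1 - aj j) / (1 - a)) * (ξjs' j).f y
                = (1 - a) * ((p j * (1 - aj j) / (1 - a)) * (ξjs' j).f y) := fun j => by ring
            rw [Finset.sum_congr rfl (fun j _ => this j), ← Finset.mul_sum, ← hcξ'.2.2 y]
          rw [h7, h8]
          rfl
        · intro j
          exact Or.inr (Or.inl ⟨aj j, ξj j, ξjs' j, haj0 j, haj1 j, hbbjs j, hmixj j,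
            fun x => rfl⟩)
    · -- μ = a·π + (1-a)·ξ', ν = a·δF + (1-a)·ξ : first resolve the Dirac by a τ-step
      have hwν : wtau τ ν (Distr.mix a ha0 ha1 (π) ξ) := by
        refine wtau_mix2 ha0 ha1 hmν (fun x => rfl) (fun _ => ?_) (fun _ => Relation.ReflTransGen.refl)
        exact Relation.ReflTransGen.single (dstep_ptau dstep_dF_pi)
      have hbbμ : bb τ μ (Distr.mix a ha0 ha1 (π) ξ) :=
        bb_mix2 ha0 ha1 hmμ (fun x => rfl) (fun _ => bb_refl _) (fun _ => bb_symm hbb)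
      exact bbcase hbbμ hwν hcp rfl
  · -- transfer
    rintro μ ν α μ' hR hd
    have bbcase : ∀ {ν₀ : Distr (PE Act)}, bb τ μ ν₀ → wtau τ ν ν₀ →
        ∃ ν' ν'', wtau τ ν ν' ∧ optStep τ ν' α ν'' ∧ Rbig τ E P μ ν' ∧ Rbig τ E P μ' ν'' := by
      intro ν₀ hbb hw
      obtain ⟨ν', ν'', hw', ho, h1, h2⟩ := bb_transfer hbb hd
      exact ⟨ν', ν'', Relation.ReflTransGen.trans hw hw', ho, Or.inl h1, Or.inl h2⟩
    rcases hR with hbb | ⟨a, ξ, ξ', ha0, ha1, hbb, hmμ, hmν⟩ | ⟨a, ξ, ξ', ha0, ha1, hbb, hmν, hmμ⟩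
    · exact bbcase hbb Relation.ReflTransGen.refl
    · by_cases haz : a = 0
      · subst haz
        have heμ : μ = ξ := Distr.ext' (fun x => by rw [hmμ x]; ring)
        have heν : ν = ξ' := Distr.ext' (fun x => by rw [hmν x]; ring)
        exact bbcase (heμ ▸ heν ▸ hbb) Relation.ReflTransGen.refl
      by_cases hao : a = 1
      · subst hao
        have heμ : μ = δF := Distr.ext' (fun x => by rw [hmμ x]; ring)
        have heν : ν = (π) := Distr.ext' (fun x => by rw [hmν x]; ring)
        obtain ⟨ζ, hζo, hζbb⟩ := match_dF hsq (heμ ▸ hd)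
        exact ⟨ν, ζ, Relation.ReflTransGen.refl, heν ▸ hζo,
          Or.inr (Or.inl ⟨1, ξ, ξ', ha0, ha1, hbb, hmμ, hmν⟩), Or.inl hζbb⟩
      · have hapos : 0 < a := lt_of_le_of_ne ha0 (Ne.symm haz)
        have halt : a < 1 := lt_of_le_of_ne ha1 hao
        -- decompose the transition
        obtain ⟨σs', hcμ', hdk⟩ := dstep_decompose (isCombo_of_isMix ha0 ha1 hmμ) hd
        have hd1 : dstep (δF) α (σs' true) := by
          have := hdk true (by simp; exact haz)
          simpa using this
        have hd2 : dstep ξ α (σs' false) := by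
          have := hdk false (by
            simp only [Bool.false_eq_true, if_false]
            intro hz
            exact hao (by linarith))
          simpa using this
        obtain ⟨ζ₁, hζo, hζbb⟩ := match_dF hsq hd1
        obtain ⟨η', η'', hwη, hoη, hbbη', hbbη''⟩ := bb_transfer hbb hd2
        set ν' := Distr.mix a ha0 ha1 (π) η' with hν'
        set ν'' := Distr.mix a ha0 ha1 ζ₁ η'' with hν''
        refine ⟨ν', ν'', ?_, ?_, ?_, ?_⟩
        · exact wtau_mix2 ha0 ha1 hmν (fun x => rfl)
            (fun _ => Relation.ReflTransGen.refl) (fun _ => hwη)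
        · exact optStep_mix2 ha0 ha1 (fun x => rfl) (fun x => rfl)
            (fun _ => hζo) (fun _ => hoη)
        · exact Or.inr (Or.inl ⟨a, ξ, η', ha0, ha1, hbbη', hmμ, fun x => rfl⟩)
        · refine Or.inl (bb_combo hcμ' (isCombo_of_isMix ha0 ha1
            (show IsMix a ζ₁ η'' ν'' from fun x => rfl)) ?_)
          intro i _
          cases i
          · exact hbbη''
          · exact hζbb
    · -- μ = a·π + (1-a)·ξ', ν = a·δF + (1-a)·ξ
      have hwν : wtau τ ν (Distr.mix a ha0 ha1 (π) ξ) := by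
        refine wtau_mix2 ha0 ha1 hmν (fun x => rfl) (fun _ => ?_) (fun _ => Relation.ReflTransGen.refl)
        exact Relation.ReflTransGen.single (dstep_ptau dstep_dF_pi)
      have hbbμ : bb τ μ (Distr.mix a ha0 ha1 (π) ξ) :=
        bb_mix2 ha0 ha1 hmμ (fun x => rfl) (fun _ => bb_refl _) (fun _ => bb_symm hbb)
      exact bbcase hbbμ hwν

end FixEP

end Main

section Final

variable {Act : Type} {τ : Act}

theorem dstep_dirac_pre_inv {β α' : Act} {P' : PP Act} {m : Distr (PE Act)}
    (hd : dstep (Distr.dirac (PE.pre β P')) α' m) : α' = β ∧ m = den P' := by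
  obtain ⟨n, q, Es, ms, hA, hB, hC⟩ := dstep_fin hd
  have hEs : ∀ j, q j ≠ 0 → Es j = PE.pre β P' := by
    intro j hj
    exact Distr.dirac_inj (hA.dirac_comp (lt_of_le_of_ne (hA.1 j) (Ne.symm hj)))
  have hms : ∀ j, q j ≠ 0 → α' = β ∧ ms j = den P' := by
    intro j hj
    have := hC j
    rw [hEs j hj] at this
    exact pstep_pre_inv this
  obtain ⟨j0, hj0⟩ := exists_ne_zero_of_sum_one hA.2.1
  refine ⟨(hms j0 hj0).1, ?_⟩
  apply Distr.ext'
  intro y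
  rw [hB.2.2 y]
  have : ∀ j, q j * (ms j).f y = q j * (den P').f y := by
    intro j
    by_cases hj : q j = 0
    · rw [hj, zero_mul, zero_mul]
    · rw [(hms j hj).2]
  rw [Finset.sum_congr rfl (fun j _ => this j), ← Finset.sum_mul, hA.2.1, one_mul]

/-- Soundness of axiom BP, main statement -/
theorem statement15' (τ : Act) (E : PE Act) (P : PP Act) (h : sq τ E P) :
    bb τ (Distr.dirac (.plus E (.pre τ P))) (den P) ∧
    ∀ (α : Act) (Q : PP Act) (r : ℝ) (h0 : 0 < r) (h1 : r < 1),
      rbb τ (Distr.dirac (.pre α (.pchoice (.dirac (.plus E (.pre τ P))) r h0 h1 Q)))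
            (Distr.dirac (.pre α (.pchoice P r h0 h1 Q))) := by
  constructor
  · exact ⟨Rbig τ E P, isBranchingBisim_Rbig h,
      Or.inr (Or.inl ⟨1, den P, den P, zero_le_one, le_refl 1, bb_refl _,
        fun x => by ring, fun x => by ring⟩)⟩
  intro α Q r h0 h1
  classical
  set A : PE Act := PE.pre α (.pchoice (.dirac (.plus E (.pre τ P))) r h0 h1 Q) with hAdef
  set B : PE Act := PE.pre α (.pchoice P r h0 h1 Q) with hBdef
  have hbbχ : bb τ (den (.pchoice (.dirac (.plus E (.pre τ P))) r h0 h1 Q))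
      (den (.pchoice P r h0 h1 Q)) :=
    ⟨Rbig τ E P, isBranchingBisim_Rbig h,
      Or.inr (Or.inl ⟨r, den Q, den Q, h0.le, h1.le, bb_refl _,
        fun x => rfl, fun x => rfl⟩)⟩
  set R₂ : Distr (PE Act) → Distr (PE Act) → Prop := fun μ ν =>
    μ = ν ∨ (μ = Distr.dirac A ∧ ν = Distr.dirac B) ∨ (μ = Distr.dirac B ∧ ν = Distr.dirac A)
    with hR₂
  have hdecomp : ∀ {G H : PE Act} (J : Type) (_ : Fintype J) (p : J → ℝ)
      (μs : J → Distr (PE Act)), R₂ (Distr.dirac G) (Distr.dirac H) →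
      IsCombo p μs (Distr.dirac G) →
      ∃ νs : J → Distr (PE Act), IsCombo p νs (Distr.dirac H) ∧
        ∀ i, R₂ (μs i) (νs i) := by
    intro G H J hJ p μs hGH hc
    refine ⟨fun j => if p j = 0 then μs j else Distr.dirac H, ⟨hc.1, hc.2.1, fun x => ?_⟩,
      fun j => ?_⟩
    · have : ∀ j, p j * (if p j = 0 then μs j else Distr.dirac H).f x
          = p j * (Distr.dirac H).f x := by
        intro j
        by_cases hj : p j = 0
        · rw [hj]; ring
        · rw [if_neg hj]
      rw [Finset.sum_congr rfl (fun j _ => this j), ← Finset.sum_mul, hc.2.1, one_mul]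
    · show R₂ (μs j) (if p j = 0 then μs j else Distr.dirac H)
      by_cases hj : p j = 0
      · rw [if_pos hj]; exact Or.inl rfl
      · rw [if_neg hj]
        have hμsj : μs j = Distr.dirac G :=
          hc.dirac_comp (lt_of_le_of_ne (hc.1 j) (Ne.symm hj))
        rcases hGH with hGH | ⟨hG, hH⟩ | ⟨hG, hH⟩
        · exact Or.inl (by rw [hμsj, hGH])
        · rw [hμsj, hG, hH]
          exact Or.inr (Or.inl ⟨rfl, rfl⟩)
        · rw [hμsj, hG, hH]
          exact Or.inr (Or.inr ⟨rfl, rfl⟩)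
  refine ⟨R₂, ⟨?_, ?_, ?_⟩, Or.inr (Or.inl ⟨rfl, rfl⟩)⟩
  · -- symmetric
    rintro μ ν (hEq | ⟨h1', h2'⟩ | ⟨h1', h2'⟩)
    · exact Or.inl hEq.symm
    · exact Or.inr (Or.inr ⟨h2', h1'⟩)
    · exact Or.inr (Or.inl ⟨h2', h1'⟩)
  · -- decomposable
    intro J hJ p μs μ ν hR hc
    rcases hR with hEq | ⟨hG, hH⟩ | ⟨hG, hH⟩
    · subst hEq
      exact ⟨μs, hc, fun i => Or.inl rfl⟩
    · subst hG; subst hH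
      exact hdecomp J hJ p μs (Or.inr (Or.inl ⟨rfl, rfl⟩)) hc
    · subst hG; subst hH
      exact hdecomp J hJ p μs (Or.inr (Or.inr ⟨rfl, rfl⟩)) hc
  · -- transfer
    intro μ ν α' μ' hR hd
    rcases hR with hEq | ⟨hG, hH⟩ | ⟨hG, hH⟩
    · subst hEq
      exact ⟨μ', hd, bb_refl μ'⟩
    · subst hG; subst hH
      obtain ⟨hα, hμ'⟩ := dstep_dirac_pre_inv hd
      refine ⟨den (.pchoice P r h0 h1 Q), by rw [hα]; exact dstep_of_pstep (pstep.pre α _), ?_⟩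
      rw [hμ']
      exact hbbχ
    · subst hG; subst hH
      obtain ⟨hα, hμ'⟩ := dstep_dirac_pre_inv hd
      refine ⟨den (.pchoice (.dirac (.plus E (.pre τ P))) r h0 h1 Q),
        by rw [hα]; exact dstep_of_pstep (pstep.pre α _), ?_⟩
      rw [hμ']
      exact bb_symm hbbχ

end Final


/-- Soundness of axiom BP: if `E ⊑ P` then `∂(E + τ.P) ≈_b P`, and consequently
`α.(∂(E + τ.P) ⊕_r Q) ≈_rb α.(P ⊕_r Q)`. -/
theorem statement15 {Act : Type} (τ : Act) (E : PE Act) (P : PP Act)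
    (h : sq τ E P) :
    bb τ (Distr.dirac (.plus E (.pre τ P))) (den P) ∧
    ∀ (α : Act) (Q : PP Act) (r : ℝ) (h0 : 0 < r) (h1 : r < 1),
      rbb τ (Distr.dirac (.pre α (.pchoice (.dirac (.plus E (.pre τ P))) r h0 h1 Q)))
            (Distr.dirac (.pre α (.pchoice P r h0 h1 Q))) := by
  exact statement15' τ E P h

end PBB
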